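/- Assume μ < δ/(1−γ), r ≥ (1−β)·c⁻·δ / ((1−γ)(1−βγ)), c⁻ ≥ βγ·c⁺ and c⁻ > (1−βγ)·c⁺. Define s₀ = μ, ξ₀ = c⁺·μ − r/(1−β), and recursively s_k = (s_{k−1} − δ)/γ and ξ_k = (c⁺ − ((1−β^k γ^k)/(1−βγ))·c⁻)·(s_k − s_{k−1}) + ξ_{k−1} for k = 1,…,K−1. Then the function W : [0,∞) → ℝ given by W(x) = ξ_{K−1}·𝟙{x < s_{K−1}} + Σ_{k=1}^{K−1} [ (c⁺ − ((1−β^k γ^k)/(1−βγ))·c⁻)·(x − s_k) + ξ_k ]·𝟙{s_k ≤ x < s_{k−1}} + [ c⁺·(x − s₀) + ξ₀ ]·𝟙{x ≥ s₀} satisfies the two-level Bellman fixed-point equation at every x ≥ 0. -/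

import Mathlib

set_option maxHeartbeats 1000000

/-- `K := ⌈ log(1 - (1-βγ)c⁺/c⁻) / log(βγ) ⌉` (logarithm base `βγ`, rounded up). -/
noncomputable def bellK (β γ cplus cminus : ℝ) : ℕ :=
  ⌈Real.log (1 - (1 - β * γ) * cplus / cminus) / Real.log (β * γ)⌉₊

/-- The objective of the two-level Bellman equation at post-effort attribute `xt`
and gaming action `u`. -/
noncomputable def bellObj (β γ cplus cminus r δ μ : ℝ) (W : ℝ → ℝ) (xt u : ℝ) : ℝ :=
  (1 - β * γ) * cplus * xt + cminus * u
    - (r + β * cplus * δ) * (if μ ≤ xt + u then 1 else 0)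
    + β * W (γ * xt + δ * (if μ ≤ xt + u then 1 else 0))

/-- Right-hand side of the two-level Bellman fixed-point equation:
infimum over `x̃ ≥ x` and `u ≥ 0` of the Bellman objective. -/
noncomputable def bellRHS (β γ cplus cminus r δ μ : ℝ) (W : ℝ → ℝ) (x : ℝ) : ℝ :=
  sInf { v : ℝ | ∃ xt u : ℝ, x ≤ xt ∧ 0 ≤ u ∧ v = bellObj β γ cplus cminus r δ μ W xt u }

namespace Bell2Aux

private lemma basicK (β γ cplus cminus : ℝ)
    (hβ0 : 0 < β) (hβ1 : β < 1) (hγ0 : 0 < γ) (hγ1 : γ < 1)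
    (hcm : 0 < cminus) (hcmcp : cminus < cplus)
    (hcm2 : (1 - β * γ) * cplus < cminus)
    (a : ℕ → ℝ) (ha : a = fun k => cplus - (1 - (β * γ) ^ k) / (1 - β * γ) * cminus)
    (n : ℕ) (hn : n = bellK β γ cplus cminus - 1) :
    1 ≤ n ∧ (∀ k ≤ n, 0 < a k) ∧ a (n + 1) ≤ 0 := by
  have hak : ∀ k : ℕ, a k = cplus - (1 - (β * γ) ^ k) / (1 - β * γ) * cminus :=
    fun k => congrFun ha k
  have hq0 : 0 < β * γ := mul_pos hβ0 hγ0
  have hq1 : β * γ < 1 := by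
    have := mul_lt_mul_of_pos_right hβ1 hγ0
    linarith
  have h1q : 0 < 1 - β * γ := by linarith
  have hcp : 0 < cplus := lt_trans hcm hcmcp
  have hA0 : 0 < 1 - (1 - β * γ) * cplus / cminus := by
    have h : (1 - β * γ) * cplus / cminus < 1 := by
      rw [div_lt_one hcm]; exact hcm2
    linarith
  have hA1 : 1 - (1 - β * γ) * cplus / cminus < 1 := by
    have h : 0 < (1 - β * γ) * cplus / cminus := by positivity
    linarith
  have hlogq : Real.log (β * γ) < 0 := Real.log_neg hq0 hq1
  have hlogA : Real.log (1 - (1 - β * γ) * cplus / cminus) < 0 := Real.log_neg hA0 hA1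
  have hL0 : 0 ≤ Real.log (1 - (1 - β * γ) * cplus / cminus) / Real.log (β * γ) :=
    le_of_lt (div_pos_iff.mpr (Or.inr ⟨hlogA, hlogq⟩))
  have hceil : (⌈Real.log (1 - (1 - β * γ) * cplus / cminus) / Real.log (β * γ)⌉₊ : ℕ)
      = bellK β γ cplus cminus := rfl
  have hK2 : 2 ≤ bellK β γ cplus cminus := by
    have h1L : (1 : ℝ) < Real.log (1 - (1 - β * γ) * cplus / cminus) / Real.log (β * γ) := by
      rw [lt_div_iff_of_neg hlogq]
      have hAq : 1 - (1 - β * γ) * cplus / cminus < β * γ := by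
        have h : (1 - β * γ) < (1 - β * γ) * cplus / cminus := by
          rw [lt_div_iff₀ hcm]; nlinarith
        linarith
      calc Real.log (1 - (1 - β * γ) * cplus / cminus) < Real.log (β * γ) :=
            (Real.log_lt_log_iff hA0 hq0).mpr hAq
        _ = 1 * Real.log (β * γ) := by ring
    have h2 : 1 < bellK β γ cplus cminus := by
      rw [← hceil]
      exact Nat.lt_ceil.mpr (by exact_mod_cast h1L)
    omega
  have hn1 : 1 ≤ n := by omega
  have hnK : n + 1 = bellK β γ cplus cminus := by omega
  have hlogmul : Real.log (1 - (1 - β * γ) * cplus / cminus)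
      = (Real.log (1 - (1 - β * γ) * cplus / cminus) / Real.log (β * γ)) *
        Real.log (β * γ) := (div_mul_cancel₀ _ (ne_of_lt hlogq)).symm
  have hXcm : (1 - β * γ) * cplus / cminus * cminus = (1 - β * γ) * cplus :=
    div_mul_cancel₀ _ (ne_of_gt hcm)
  refine ⟨hn1, ?_, ?_⟩
  · intro k hk
    have hnL : (n : ℝ) < Real.log (1 - (1 - β * γ) * cplus / cminus) / Real.log (β * γ) := by
      have h1 := Nat.ceil_lt_add_one hL0
      rw [hceil] at h1
      have h3 : ((n : ℕ) : ℝ) = (bellK β γ cplus cminus : ℝ) - 1 := by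
        have := congrArg (Nat.cast (R := ℝ)) hnK
        push_cast at this
        linarith
      linarith
    have hkL : (k : ℝ) < Real.log (1 - (1 - β * γ) * cplus / cminus) / Real.log (β * γ) := by
      have : (k : ℝ) ≤ (n : ℝ) := by exact_mod_cast hk
      linarith
    have h1 : Real.log (1 - (1 - β * γ) * cplus / cminus) < Real.log ((β * γ) ^ k) := by
      rw [Real.log_pow, hlogmul]
      exact mul_lt_mul_of_neg_right hkL hlogq
    have hpow := (Real.log_lt_log_iff hA0 (pow_pos hq0 k)).mp h1
    have h2 : (1 - (β * γ) ^ k) * cminus < (1 - β * γ) * cplus := by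
      have h4 := mul_lt_mul_of_pos_right hpow hcm
      nlinarith [h4, hXcm]
    rw [hak, sub_pos, div_mul_eq_mul_div, div_lt_iff₀ h1q]
    linarith [h2]
  · have hKL : Real.log (1 - (1 - β * γ) * cplus / cminus) / Real.log (β * γ)
        ≤ ((n + 1 : ℕ) : ℝ) := by
      have h1 := Nat.le_ceil (Real.log (1 - (1 - β * γ) * cplus / cminus) / Real.log (β * γ))
      rw [hceil] at h1
      have h2 : ((n + 1 : ℕ) : ℝ) = (bellK β γ cplus cminus : ℝ) := by
        exact_mod_cast congrArg (Nat.cast (R := ℝ)) hnK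
      linarith [h2 ▸ h1]
    have h1 : Real.log ((β * γ) ^ (n + 1)) ≤ Real.log (1 - (1 - β * γ) * cplus / cminus) := by
      rw [Real.log_pow, hlogmul]
      exact mul_le_mul_of_nonpos_right hKL (le_of_lt hlogq)
    have hpow := (Real.log_le_log_iff (pow_pos hq0 (n + 1)) hA0).mp h1
    have h2 : (1 - β * γ) * cplus ≤ (1 - (β * γ) ^ (n + 1)) * cminus := by
      have h4 := mul_le_mul_of_nonneg_right hpow (le_of_lt hcm)
      nlinarith [h4, hXcm]
    rw [hak, sub_nonpos, div_mul_eq_mul_div, le_div_iff₀ h1q]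
    linarith [h2]

private lemma aMisc (β γ cplus cminus : ℝ)
    (hq0 : 0 < β * γ) (hq1 : β * γ < 1) (hcm : 0 < cminus)
    (a : ℕ → ℝ) (ha : a = fun k => cplus - (1 - (β * γ) ^ k) / (1 - β * γ) * cminus) :
    (∀ k : ℕ, a (k + 1) = (1 - β * γ) * cplus - cminus + (β * γ) * a k) ∧
    a 0 = cplus ∧ a 1 = cplus - cminus ∧ (∀ j k : ℕ, j ≤ k → a k ≤ a j) := by
  have hak : ∀ k : ℕ, a k = cplus - (1 - (β * γ) ^ k) / (1 - β * γ) * cminus :=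
    fun k => congrFun ha k
  have h1q : 0 < 1 - β * γ := by linarith
  refine ⟨?_, ?_, ?_, ?_⟩
  · intro k
    rw [hak, hak]
    field_simp
    ring
  · rw [hak]; norm_num
  · rw [hak, pow_one, div_self (ne_of_gt h1q)]
    ring
  · intro j k h
    have hp : (β * γ) ^ k ≤ (β * γ) ^ j := pow_le_pow_of_le_one (le_of_lt hq0) (le_of_lt hq1) h
    rw [hak, hak]
    have h2 : (1 - (β * γ) ^ j) / (1 - β * γ) * cminus
        ≤ (1 - (β * γ) ^ k) / (1 - β * γ) * cminus := by
      apply mul_le_mul_of_nonneg_right _ (le_of_lt hcm)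
      exact (div_le_div_iff_of_pos_right h1q).mpr (by linarith)
    linarith

private lemma sFacts (γ δ μ : ℝ) (hγ0 : 0 < γ) (h1γ : 0 < 1 - γ)
    (hμsmall : μ < δ / (1 - γ)) (s : ℕ → ℝ) (hs0 : s 0 = μ)
    (hsrec : ∀ k : ℕ, s (k + 1) = (s k - δ) / γ) :
    (∀ k : ℕ, s (k + 1) < s k) ∧ (∀ j k : ℕ, j ≤ k → s k ≤ s j) ∧
    (∀ k : ℕ, γ * s (k + 1) + δ = s k) ∧ (∀ k : ℕ, s k ≤ μ) := by
  have hsfix : ∀ k : ℕ, s k * (1 - γ) < δ := by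
    intro k
    induction k with
    | zero =>
      rw [hs0]
      exact (lt_div_iff₀ h1γ).mp hμsmall
    | succ k ih =>
      rw [hsrec k, div_mul_eq_mul_div, div_lt_iff₀ hγ0]
      nlinarith
  have hsdec : ∀ k : ℕ, s (k + 1) < s k := by
    intro k
    rw [hsrec k, div_lt_iff₀ hγ0]
    nlinarith [hsfix k]
  have hsmono : ∀ j k : ℕ, j ≤ k → s k ≤ s j := by
    intro j k h
    induction k, h using Nat.le_induction with
    | base => exact le_rfl
    | succ k hk ih => exact le_trans (le_of_lt (hsdec k)) ih
  refine ⟨hsdec, hsmono, fun k => ?_, fun k => hs0 ▸ hsmono 0 k (Nat.zero_le k)⟩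
  rw [hsrec k]
  field_simp
  ring

private lemma eIdent (β γ cplus cminus r δ μ : ℝ) (s ξ a : ℕ → ℝ)
    (hs0 : s 0 = μ)
    (hsstep : ∀ k : ℕ, γ * s (k + 1) + δ = s k)
    (hxirec : ∀ k : ℕ, ξ (k + 1) = a (k + 1) * (s (k + 1) - s k) + ξ k)
    (hξ0' : (1 - β) * ξ 0 = (1 - β) * cplus * μ - r)
    (a0 : a 0 = cplus) (a1 : a 1 = cplus - cminus)
    (a_rec : ∀ k : ℕ, a (k + 1) = (1 - β * γ) * cplus - cminus + (β * γ) * a k) :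
    ∀ k : ℕ, (1 - β) * ξ k =
      a (k + 1) * s k - β * γ * a k * s (k + 1) + cminus * μ - r - β * cplus * δ := by
  intro k
  induction k with
  | zero =>
    have e5 := hsstep 0
    linear_combination hξ0' - s 0 * a1 + (β * γ * s (0 + 1)) * a0 + (β * cplus) * e5
      - ((1 - β) * cplus - cminus) * hs0
  | succ k ih =>
    rw [hxirec k]
    have e3 := a_rec (k + 1)
    have e4 := a_rec k
    have e5 := hsstep (k + 1)
    have e6 := hsstep k
    linear_combination ih - s (k + 1) * e3 + (β * a (k + 1)) * e5 + s (k + 1) * e4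
      - (β * a (k + 1)) * e6

private lemma xiChain (cplus cminus : ℝ) (s ξ a : ℕ → ℝ) (n : ℕ)
    (hcpcm : 0 < cplus - cminus)
    (ha_pos : ∀ k ≤ n, 0 < a k)
    (ha_le1 : ∀ k : ℕ, 1 ≤ k → a k ≤ cplus - cminus)
    (hsdec : ∀ k : ℕ, s (k + 1) < s k)
    (hxirec : ∀ k : ℕ, ξ (k + 1) = a (k + 1) * (s (k + 1) - s k) + ξ k) :
    (∀ j k : ℕ, j ≤ k → k ≤ n → ξ k ≤ ξ j) ∧
    (∀ j k : ℕ, j ≤ k → k ≤ n → ξ j - ξ k ≤ (cplus - cminus) * (s j - s k)) := by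
  constructor
  · intro j k hjk hkn
    induction k, hjk using Nat.le_induction with
    | base => exact le_rfl
    | succ k hk ih =>
      have h1 : ξ (k + 1) ≤ ξ k := by
        rw [hxirec k]
        have h2 := ha_pos (k + 1) hkn
        nlinarith [hsdec k]
      exact le_trans h1 (ih (by omega))
  · intro j k hjk hkn
    induction k, hjk using Nat.le_induction with
    | base => simp
    | succ k hk ih =>
      have h1 := ih (by omega)
      have h2 := ha_le1 (k + 1) (by omega)
      have h3 := ha_pos (k + 1) hkn
      have h4 := hsdec k
      rw [hxirec k]
      nlinarith

private lemma wPieces (β γ cplus cminus : ℝ) (s ξ a : ℕ → ℝ) (W : ℝ → ℝ) (n : ℕ)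
    (ha : a = fun k => cplus - (1 - (β * γ) ^ k) / (1 - β * γ) * cminus)
    (hsmono : ∀ j k : ℕ, j ≤ k → s k ≤ s j)
    (hW : ∀ x : ℝ, W x =
        (if x < s n then ξ n else 0)
        + ∑ k ∈ Finset.Icc 1 n,
            (if s k ≤ x ∧ x < s (k - 1) then
              (cplus - ((1 - (β * γ) ^ k) / (1 - β * γ)) * cminus) * (x - s k) + ξ k else 0)
        + (if s 0 ≤ x then cplus * (x - s 0) + ξ 0 else 0)) :
    (∀ y : ℝ, s 0 ≤ y → W y = cplus * (y - s 0) + ξ 0) ∧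
    (∀ m : ℕ, m + 1 ≤ n → ∀ y : ℝ, s (m + 1) ≤ y → y < s m →
      W y = a (m + 1) * (y - s (m + 1)) + ξ (m + 1)) ∧
    (∀ y : ℝ, y < s n → W y = ξ n) := by
  have hak : ∀ k : ℕ, a k = cplus - (1 - (β * γ) ^ k) / (1 - β * γ) * cminus :=
    fun k => congrFun ha k
  refine ⟨?_, ?_, ?_⟩
  · intro y hy
    rw [hW y]
    rw [if_neg (by push_neg; exact le_trans (hsmono 0 n (Nat.zero_le n)) hy)]
    rw [Finset.sum_eq_zero, if_pos hy]
    · ring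
    · intro j hj
      rw [if_neg]
      rintro ⟨hj1, hj2⟩
      have := hsmono 0 (j - 1) (Nat.zero_le _)
      linarith
  · intro m hm y h1 h2
    rw [hW y]
    have hsum : (∑ k ∈ Finset.Icc 1 n, if s k ≤ y ∧ y < s (k - 1) then
        (cplus - (1 - (β * γ) ^ k) / (1 - β * γ) * cminus) * (y - s k) + ξ k else 0)
        = a (m + 1) * (y - s (m + 1)) + ξ (m + 1) := by
      rw [Finset.sum_eq_single_of_mem (m + 1) (Finset.mem_Icc.mpr ⟨by omega, hm⟩)]
      · rw [if_pos ⟨h1, by simpa using h2⟩, hak (m + 1)]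
      · intro j hj hne
        rw [if_neg]
        rintro ⟨hj1, hj2⟩
        obtain ⟨hj3, hj4⟩ := Finset.mem_Icc.mp hj
        rcases lt_or_gt_of_ne hne with hlt | hgt
        · have : s m ≤ s j := hsmono j m (by omega)
          linarith
        · have : s (j - 1) ≤ s (m + 1) := hsmono (m + 1) (j - 1) (by omega)
          linarith
    rw [hsum]
    rw [if_neg (by push_neg; exact le_trans (hsmono (m + 1) n hm) h1)]
    rw [if_neg (by push_neg; exact lt_of_lt_of_le h2 (hsmono 0 m (Nat.zero_le m)))]
    ring
  · intro y hy
    rw [hW y]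
    rw [if_pos hy, Finset.sum_eq_zero, if_neg]
    · ring
    · push_neg
      exact lt_of_lt_of_le hy (hsmono 0 n (Nat.zero_le n))
    · intro j hj
      rw [if_neg]
      rintro ⟨hj1, hj2⟩
      obtain ⟨hj3, hj4⟩ := Finset.mem_Icc.mp hj
      have := hsmono j n hj4
      linarith

private lemma classify (s : ℕ → ℝ) (n : ℕ) (hn1 : 1 ≤ n) :
    ∀ t : ℝ, s n ≤ t → t < s 0 →
      ∃ m : ℕ, m + 1 ≤ n ∧ s (m + 1) ≤ t ∧ t < s m := by
  intro t h1 h2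
  have H : ∀ j : ℕ, 1 ≤ j → j ≤ n → s j ≤ t →
      ∃ m : ℕ, m + 1 ≤ n ∧ s (m + 1) ≤ t ∧ t < s m := by
    intro j
    induction j with
    | zero => intro h; exact absurd h (by norm_num)
    | succ j ih =>
      intro _ hjn hst
      rcases Nat.eq_zero_or_pos j with rfl | hj
      · exact ⟨0, hjn, hst, h2⟩
      · rcases le_or_gt (s j) t with h | h
        · exact ih hj (by omega) h
        · exact ⟨j, hjn, hst, h⟩
  exact H n hn1 le_rfl h1

private lemma wLB (cplus cminus : ℝ) (s ξ a : ℕ → ℝ) (W : ℝ → ℝ) (n : ℕ)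
    (hcp : 0 < cplus)
    (ha_pos : ∀ k ≤ n, 0 < a k)
    (hxi_mono : ∀ j k : ℕ, j ≤ k → k ≤ n → ξ k ≤ ξ j)
    (hclass : ∀ t : ℝ, s n ≤ t → t < s 0 →
      ∃ m : ℕ, m + 1 ≤ n ∧ s (m + 1) ≤ t ∧ t < s m)
    (hW1 : ∀ y : ℝ, s 0 ≤ y → W y = cplus * (y - s 0) + ξ 0)
    (hW2 : ∀ m : ℕ, m + 1 ≤ n → ∀ y : ℝ, s (m + 1) ≤ y → y < s m →
      W y = a (m + 1) * (y - s (m + 1)) + ξ (m + 1))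
    (hW3 : ∀ y : ℝ, y < s n → W y = ξ n) :
    ∀ y : ℝ, ξ n ≤ W y := by
  intro y
  rcases lt_or_ge y (s n) with h | h
  · rw [hW3 y h]
  · rcases lt_or_ge y (s 0) with h2 | h2
    · obtain ⟨m, hm, hm1, hm2⟩ := hclass y h h2
      rw [hW2 m hm y hm1 hm2]
      have h3 := ha_pos (m + 1) hm
      have h4 := hxi_mono (m + 1) n hm le_rfl
      nlinarith
    · rw [hW1 y h2]
      have h4 := hxi_mono 0 n (Nat.zero_le n) le_rfl
      nlinarith

private lemma wMono (cplus cminus : ℝ) (s ξ a : ℕ → ℝ) (W : ℝ → ℝ) (n : ℕ)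
    (hcp : 0 < cplus)
    (ha_pos : ∀ k ≤ n, 0 < a k)
    (hsmono : ∀ j k : ℕ, j ≤ k → s k ≤ s j)
    (hxirec : ∀ k : ℕ, ξ (k + 1) = a (k + 1) * (s (k + 1) - s k) + ξ k)
    (hxi_mono : ∀ j k : ℕ, j ≤ k → k ≤ n → ξ k ≤ ξ j)
    (hclass : ∀ t : ℝ, s n ≤ t → t < s 0 →
      ∃ m : ℕ, m + 1 ≤ n ∧ s (m + 1) ≤ t ∧ t < s m)
    (hW1 : ∀ y : ℝ, s 0 ≤ y → W y = cplus * (y - s 0) + ξ 0)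
    (hW2 : ∀ m : ℕ, m + 1 ≤ n → ∀ y : ℝ, s (m + 1) ≤ y → y < s m →
      W y = a (m + 1) * (y - s (m + 1)) + ξ (m + 1))
    (hW3 : ∀ y : ℝ, y < s n → W y = ξ n)
    (hWlb : ∀ y : ℝ, ξ n ≤ W y) :
    ∀ p q : ℝ, p ≤ q → W p ≤ W q := by
  intro p q hpq
  rcases lt_or_ge p (s n) with h | h
  · rw [hW3 p h]; exact hWlb q
  rcases lt_or_ge p (s 0) with h2 | h2
  · obtain ⟨m, hm, hm1, hm2⟩ := hclass p h h2
    rw [hW2 m hm p hm1 hm2]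
    have h3 := ha_pos (m + 1) hm
    have hstep : a (m + 1) * (p - s (m + 1)) + ξ (m + 1) ≤ ξ m := by
      have h4 := hxirec m
      nlinarith
    rcases lt_or_ge q (s 0) with h3' | h3'
    · have h4 : s n ≤ q := le_trans (le_trans (hsmono (m + 1) n hm) hm1) hpq
      obtain ⟨j, hj, hj1, hj2⟩ := hclass q h4 h3'
      rcases Nat.lt_or_ge j (m + 1) with hjm | hjm
      · rcases Nat.eq_or_lt_of_le (Nat.lt_succ_iff.mp hjm) with heq | hlt
        · subst heq
          rw [hW2 j hj q hj1 hj2]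
          nlinarith
        · rw [hW2 j hj q hj1 hj2]
          have h5 : ξ m ≤ ξ (j + 1) := hxi_mono (j + 1) m hlt (by omega)
          have h6 := ha_pos (j + 1) hj
          nlinarith
      · exfalso
        have : s j ≤ s (m + 1) := hsmono (m + 1) j hjm
        linarith
    · rw [hW1 q h3']
      have h5 : ξ m ≤ ξ 0 := hxi_mono 0 m (Nat.zero_le m) (by omega)
      nlinarith
  · have h3 : s 0 ≤ q := le_trans h2 hpq
    rw [hW1 p h2, hW1 q h3]
    nlinarith

private lemma wLip (cplus cminus : ℝ) (s ξ a : ℕ → ℝ) (W : ℝ → ℝ) (n : ℕ)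
    (hcpcm : 0 < cplus - cminus)
    (ha_le1 : ∀ k : ℕ, 1 ≤ k → a k ≤ cplus - cminus)
    (hsmono : ∀ j k : ℕ, j ≤ k → s k ≤ s j)
    (hxirec : ∀ k : ℕ, ξ (k + 1) = a (k + 1) * (s (k + 1) - s k) + ξ k)
    (hxi_lip : ∀ j k : ℕ, j ≤ k → k ≤ n → ξ j - ξ k ≤ (cplus - cminus) * (s j - s k))
    (hclass : ∀ t : ℝ, s n ≤ t → t < s 0 →
      ∃ m : ℕ, m + 1 ≤ n ∧ s (m + 1) ≤ t ∧ t < s m)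
    (hW1 : ∀ y : ℝ, s 0 ≤ y → W y = cplus * (y - s 0) + ξ 0)
    (hW2 : ∀ m : ℕ, m + 1 ≤ n → ∀ y : ℝ, s (m + 1) ≤ y → y < s m →
      W y = a (m + 1) * (y - s (m + 1)) + ξ (m + 1))
    (hW3 : ∀ y : ℝ, y < s n → W y = ξ n) :
    ∀ p q : ℝ, p ≤ q → q ≤ s 0 → W q ≤ W p + (cplus - cminus) * (q - p) := by
  intro p q hpq hqs
  rcases lt_or_ge q (s n) with h | h
  · rw [hW3 q h, hW3 p (lt_of_le_of_lt hpq h)]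
    nlinarith
  rcases lt_or_ge q (s 0) with h2 | h2
  · obtain ⟨j, hj, hj1, hj2⟩ := hclass q h h2
    rw [hW2 j hj q hj1 hj2]
    rcases lt_or_ge p (s n) with hp | hp
    · rw [hW3 p hp]
      have l1 := hxi_lip (j + 1) n hj le_rfl
      have l2 := ha_le1 (j + 1) (by omega)
      have l3 : s n ≤ s (j + 1) := hsmono (j + 1) n hj
      nlinarith [mul_le_mul_of_nonneg_right l2 (by linarith : (0:ℝ) ≤ q - s (j + 1))]
    · have hps0 : p < s 0 := lt_of_le_of_lt hpq h2
      obtain ⟨m, hm, hm1, hm2⟩ := hclass p hp hps0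
      rw [hW2 m hm p hm1 hm2]
      rcases Nat.lt_or_ge m j with hjm | hjm
      · exfalso
        have : s j ≤ s (m + 1) := hsmono (m + 1) j (by omega)
        linarith
      · rcases Nat.eq_or_lt_of_le hjm with heq | hlt
        · subst heq
          have l2 := ha_le1 (j + 1) (by omega)
          nlinarith [mul_le_mul_of_nonneg_right l2 (by linarith : (0:ℝ) ≤ q - p)]
        · have l1 := hxi_lip (j + 1) m hlt (by omega)
          have l2 := ha_le1 (j + 1) (by omega)
          have l3 := ha_le1 (m + 1) (by omega)
          have l6 := hxirec m
          have p1 : a (j + 1) * (q - s (j + 1)) ≤ (cplus - cminus) * (q - s (j + 1)) :=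
            mul_le_mul_of_nonneg_right l2 (by linarith)
          have p2 : (cplus - cminus) * (p - s m) ≤ a (m + 1) * (p - s m) := by
            nlinarith
          nlinarith [p1, p2, l1, l6]
  · have hq0' : q = s 0 := le_antisymm hqs h2
    subst hq0'
    rw [hW1 (s 0) le_rfl]
    rcases lt_or_ge p (s n) with hp | hp
    · rw [hW3 p hp]
      have l1 := hxi_lip 0 n (Nat.zero_le n) le_rfl
      have l3 : s n ≤ s 0 := hsmono 0 n (Nat.zero_le n)
      nlinarith
    · rcases lt_or_ge p (s 0) with hps0 | hps0
      · obtain ⟨m, hm, hm1, hm2⟩ := hclass p hp hps0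
        rw [hW2 m hm p hm1 hm2]
        have l1 := hxi_lip 0 m (Nat.zero_le m) (by omega)
        have l3 := ha_le1 (m + 1) (by omega)
        have l6 := hxirec m
        have p2 : (cplus - cminus) * (p - s m) ≤ a (m + 1) * (p - s m) := by
          nlinarith
        nlinarith [l1, p2, l6]
      · have hps : p = s 0 := le_antisymm hpq hps0
        rw [hps, hW1 (s 0) le_rfl]
        nlinarith

private lemma hAgree (β γ cplus cminus r δ μ : ℝ) (s ξ a : ℕ → ℝ) (W : ℝ → ℝ) (n : ℕ)
    (hγ0 : 0 < γ) (h1γ : 0 < 1 - γ) (hμsmall : μ < δ / (1 - γ))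
    (hs0 : s 0 = μ)
    (hsμ : ∀ k : ℕ, s k ≤ μ)
    (hsstep : ∀ k : ℕ, γ * s (k + 1) + δ = s k)
    (a0 : a 0 = cplus)
    (a_rec : ∀ k : ℕ, a (k + 1) = (1 - β * γ) * cplus - cminus + (β * γ) * a k)
    (hxirec : ∀ k : ℕ, ξ (k + 1) = a (k + 1) * (s (k + 1) - s k) + ξ k)
    (hξ0' : (1 - β) * ξ 0 = (1 - β) * cplus * μ - r)
    (hE : ∀ k : ℕ, (1 - β) * ξ k =
      a (k + 1) * s k - β * γ * a k * s (k + 1) + cminus * μ - r - β * cplus * δ)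
    (hclass : ∀ t : ℝ, s n ≤ t → t < s 0 →
      ∃ m : ℕ, m + 1 ≤ n ∧ s (m + 1) ≤ t ∧ t < s m)
    (hW1 : ∀ y : ℝ, s 0 ≤ y → W y = cplus * (y - s 0) + ξ 0)
    (hW2 : ∀ m : ℕ, m + 1 ≤ n → ∀ y : ℝ, s (m + 1) ≤ y → y < s m →
      W y = a (m + 1) * (y - s (m + 1)) + ξ (m + 1)) :
    ∀ t : ℝ, s n ≤ t →
      (1 - β * γ) * cplus * t + cminus * max (μ - t) 0 - (r + β * cplus * δ)
        + β * W (γ * t + δ) = W t := by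
  intro t ht
  rcases lt_or_ge t (s 0) with h2 | h2
  · obtain ⟨m, hm, hm1, hm2⟩ := hclass t ht h2
    have hmax : max (μ - t) 0 = μ - t := max_eq_left (by linarith [hsμ m])
    rw [hmax, hW2 m hm t hm1 hm2]
    have harg1 : s m ≤ γ * t + δ := by
      rw [← hsstep m]
      nlinarith [mul_le_mul_of_nonneg_left hm1 (le_of_lt hγ0)]
    have e1 := hE m
    have e3 := a_rec m
    have e2 := hxirec m
    rcases Nat.eq_zero_or_pos m with rfl | hm0
    · have hw' : W (γ * t + δ) = a 0 * (γ * t + δ - s 0) + ξ 0 := by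
        rw [hW1 _ harg1, a0]
      rw [hw']
      linear_combination (-t) * e3 - e2 - e1 + (β * a 0) * hsstep 0
    · obtain ⟨m', rfl⟩ : ∃ m', m = m' + 1 := ⟨m - 1, by omega⟩
      have harg2 : γ * t + δ < s m' := by
        rw [← hsstep m']
        nlinarith [mul_lt_mul_of_pos_left hm2 hγ0]
      rw [hW2 m' (by omega) _ harg1 harg2]
      linear_combination (-t) * e3 - e2 - e1 + (β * a (m' + 1)) * hsstep (m' + 1)
  · have hμt : μ ≤ t := hs0 ▸ h2
    have hmax : max (μ - t) 0 = 0 := max_eq_right (by linarith)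
    have hμγ : μ * (1 - γ) < δ := (lt_div_iff₀ h1γ).mp hμsmall
    have harg : s 0 ≤ γ * t + δ := by
      rw [hs0]
      nlinarith [mul_le_mul_of_nonneg_left hμt (le_of_lt hγ0)]
    rw [hmax, hW1 t h2, hW1 _ harg]
    linear_combination (-1 : ℝ) * hξ0' + ((1 - β) * cplus - cminus * 0) * hs0

private lemma hBelow (β γ cplus cminus r δ μ : ℝ) (s ξ a : ℕ → ℝ) (W : ℝ → ℝ) (n : ℕ)
    (hγ0 : 0 < γ) (hn1 : 1 ≤ n)
    (hcm2 : (1 - β * γ) * cplus < cminus)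
    (hsμ : ∀ k : ℕ, s k ≤ μ)
    (hsdec : ∀ k : ℕ, s (k + 1) < s k)
    (hsstep : ∀ k : ℕ, γ * s (k + 1) + δ = s k)
    (haK : a (n + 1) ≤ 0)
    (a_rec : ∀ k : ℕ, a (k + 1) = (1 - β * γ) * cplus - cminus + (β * γ) * a k)
    (hE : ∀ k : ℕ, (1 - β) * ξ k =
      a (k + 1) * s k - β * γ * a k * s (k + 1) + cminus * μ - r - β * cplus * δ)
    (hW2 : ∀ m : ℕ, m + 1 ≤ n → ∀ y : ℝ, s (m + 1) ≤ y → y < s m →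
      W y = a (m + 1) * (y - s (m + 1)) + ξ (m + 1))
    (hW3 : ∀ y : ℝ, y < s n → W y = ξ n) :
    ∀ t : ℝ, t < s n → ξ n ≤
      (1 - β * γ) * cplus * t + cminus * max (μ - t) 0 - (r + β * cplus * δ)
        + β * W (γ * t + δ) := by
  intro t ht
  have hmax : max (μ - t) 0 = μ - t := max_eq_left (by linarith [hsμ n])
  rw [hmax]
  have e1 := hE n
  have e3 := a_rec n
  rcases lt_or_ge t (s (n + 1)) with hc | hc
  · have harg : γ * t + δ < s n := by
      rw [← hsstep n]
      nlinarith [mul_lt_mul_of_pos_left hc hγ0]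
    rw [hW3 _ harg]
    have key : (1 - β * γ) * cplus * t + cminus * (μ - t) - (r + β * cplus * δ)
        + β * ξ n - ξ n
        = ((1 - β * γ) * cplus - cminus) * (t - s (n + 1))
          + a (n + 1) * (s (n + 1) - s n) := by
      linear_combination (-1 : ℝ) * e1 - s (n + 1) * e3
    nlinarith [key,
      mul_nonneg (by linarith : (0:ℝ) ≤ cminus - (1 - β * γ) * cplus)
        (by linarith : (0:ℝ) ≤ s (n + 1) - t),
      mul_nonneg (by linarith [haK] : (0:ℝ) ≤ -a (n + 1))
        (by linarith [hsdec n] : (0:ℝ) ≤ s n - s (n + 1))]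
  · obtain ⟨n', hn'⟩ : ∃ n', n = n' + 1 := ⟨n - 1, by omega⟩
    have harg1 : s n ≤ γ * t + δ := by
      rw [← hsstep n]
      nlinarith [mul_le_mul_of_nonneg_left hc (le_of_lt hγ0)]
    have harg2 : γ * t + δ < s n' := by
      rw [← hsstep n']
      have hts : t < s (n' + 1) := hn' ▸ ht
      nlinarith [mul_lt_mul_of_pos_left hts hγ0]
    have hw : W (γ * t + δ) = a n * (γ * t + δ - s n) + ξ n := by
      rw [hn'] at harg1 ⊢
      exact hW2 n' (by omega) _ harg1 harg2
    rw [hw]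
    have key : (1 - β * γ) * cplus * t + cminus * (μ - t) - (r + β * cplus * δ)
        + β * (a n * (γ * t + δ - s n) + ξ n) - ξ n = a (n + 1) * (t - s n) := by
      linear_combination (-1 : ℝ) * e1 - t * e3 + (β * a n) * hsstep n
    nlinarith [key,
      mul_nonneg (by linarith [haK] : (0:ℝ) ≤ -a (n + 1))
        (by linarith : (0:ℝ) ≤ s n - t)]

end Bell2Aux

/-- Claim B.1 (small-threshold fixed point, Theorem 3.1): under
`μ < δ/(1-γ)`, `r ≥ (1-β)c⁻δ/((1-γ)(1-βγ))`, `c⁻ ≥ βγc⁺` and `c⁻ > (1-βγ)c⁺`, the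
piecewise-linear function `W` built from the sequences `s_k, ξ_k` satisfies the
two-level Bellman fixed-point equation at every `x ≥ 0`. -/
theorem stmt_2 (β γ cplus cminus r δ μ : ℝ)
    (hβ : β ∈ Set.Ioo (0:ℝ) 1) (hγ : γ ∈ Set.Ioo (0:ℝ) 1)
    (hcm : 0 < cminus) (hcmcp : cminus < cplus)
    (hr : 0 < r) (hδ : 0 ≤ δ) (hμpos : 0 < μ)
    (hμsmall : μ < δ / (1 - γ))
    (hrbig : (1 - β) * cminus * δ / ((1 - γ) * (1 - β * γ)) ≤ r)
    (hcm1 : β * γ * cplus ≤ cminus)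
    (hcm2 : (1 - β * γ) * cplus < cminus)
    (s ξ : ℕ → ℝ)
    (hs0 : s 0 = μ) (hξ0 : ξ 0 = cplus * μ - r / (1 - β))
    (hsrec : ∀ k : ℕ, s (k + 1) = (s k - δ) / γ)
    (hξrec : ∀ k : ℕ, ξ (k + 1) =
        (cplus - ((1 - (β * γ) ^ (k + 1)) / (1 - β * γ)) * cminus) * (s (k + 1) - s k) + ξ k)
    (W : ℝ → ℝ)
    (hW : ∀ x : ℝ, W x =
        (if x < s (bellK β γ cplus cminus - 1) then ξ (bellK β γ cplus cminus - 1) else 0)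
        + ∑ k ∈ Finset.Icc 1 (bellK β γ cplus cminus - 1),
            (if s k ≤ x ∧ x < s (k - 1) then
              (cplus - ((1 - (β * γ) ^ k) / (1 - β * γ)) * cminus) * (x - s k) + ξ k else 0)
        + (if s 0 ≤ x then cplus * (x - s 0) + ξ 0 else 0)) :
    ∀ x : ℝ, 0 ≤ x → W x = bellRHS β γ cplus cminus r δ μ W x := by
  obtain ⟨hβ0, hβ1⟩ := hβ
  obtain ⟨hγ0, hγ1⟩ := hγ
  have hq0 : 0 < β * γ := mul_pos hβ0 hγ0
  have hq1 : β * γ < 1 := by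
    have := mul_lt_mul_of_pos_right hβ1 hγ0
    linarith
  have h1q : 0 < 1 - β * γ := by linarith
  have h1β : 0 < 1 - β := by linarith
  have h1γ : 0 < 1 - γ := by linarith
  have hcp : 0 < cplus := lt_trans hcm hcmcp
  have hcpcm : 0 < cplus - cminus := by linarith
  set n := bellK β γ cplus cminus - 1 with hn
  set a : ℕ → ℝ := fun k => cplus - (1 - (β * γ) ^ k) / (1 - β * γ) * cminus with ha
  clear_value a
  obtain ⟨hn1, ha_pos, haK⟩ :=
    Bell2Aux.basicK β γ cplus cminus hβ0 hβ1 hγ0 hγ1 hcm hcmcp hcm2 a ha n hn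
  obtain ⟨a_rec, a0, a1, a_anti⟩ := Bell2Aux.aMisc β γ cplus cminus hq0 hq1 hcm a ha
  have ha_le1 : ∀ k : ℕ, 1 ≤ k → a k ≤ cplus - cminus := by
    intro k hk; rw [← a1]; exact a_anti 1 k hk
  obtain ⟨hsdec, hsmono, hsstep, hsμ⟩ :=
    Bell2Aux.sFacts γ δ μ hγ0 h1γ hμsmall s hs0 hsrec
  have hxirec : ∀ k : ℕ, ξ (k + 1) = a (k + 1) * (s (k + 1) - s k) + ξ k := by
    intro k
    rw [congrFun ha (k + 1)]
    exact hξrec k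
  have hξ0' : (1 - β) * ξ 0 = (1 - β) * cplus * μ - r := by
    rw [hξ0]; field_simp
  have hE := Bell2Aux.eIdent β γ cplus cminus r δ μ s ξ a hs0 hsstep hxirec hξ0' a0 a1 a_rec
  obtain ⟨hxi_mono, hxi_lip⟩ :=
    Bell2Aux.xiChain cplus cminus s ξ a n hcpcm ha_pos ha_le1 hsdec hxirec
  obtain ⟨hW1, hW2, hW3⟩ := Bell2Aux.wPieces β γ cplus cminus s ξ a W n ha hsmono hW
  have hclass := Bell2Aux.classify s n hn1
  have hWlb := Bell2Aux.wLB cplus cminus s ξ a W n hcp ha_pos hxi_mono hclass hW1 hW2 hW3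
  have hWmono := Bell2Aux.wMono cplus cminus s ξ a W n hcp ha_pos hsmono hxirec hxi_mono
    hclass hW1 hW2 hW3 hWlb
  have hWlip := Bell2Aux.wLip cplus cminus s ξ a W n hcpcm ha_le1 hsmono hxirec hxi_lip
    hclass hW1 hW2 hW3
  have hH := Bell2Aux.hAgree β γ cplus cminus r δ μ s ξ a W n hγ0 h1γ hμsmall hs0 hsμ hsstep
    a0 a_rec hxirec hξ0' hE hclass hW1 hW2
  have hHlow := Bell2Aux.hBelow β γ cplus cminus r δ μ s ξ a W n hγ0 hn1 hcm2 hsμ hsdec hsstep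
    haK a_rec hE hW2 hW3
  -- reach branch dominates W x
  have hreach : ∀ x t : ℝ, x ≤ t →
      W x ≤ (1 - β * γ) * cplus * t + cminus * max (μ - t) 0 - (r + β * cplus * δ)
        + β * W (γ * t + δ) := by
    intro x t hxt
    rcases lt_or_ge t (s n) with hts | hts
    · rw [hW3 x (lt_of_le_of_lt hxt hts)]
      exact hHlow t hts
    · have h := hWmono x t hxt
      rw [← hH t hts] at h
      exact h
  -- negativity of W below μ
  have hrlarge : (1 - β) * cplus * μ < r := by
    have hA : (1 - β) * cminus * δ ≤ r * ((1 - γ) * (1 - β * γ)) :=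
      (div_le_iff₀ (by positivity)).mp hrbig
    have hμγ : μ * (1 - γ) < δ := (lt_div_iff₀ h1γ).mp hμsmall
    have hB : (1 - β) * cminus * (μ * (1 - γ)) < (1 - β) * cminus * δ :=
      mul_lt_mul_of_pos_left hμγ (by positivity)
    have hC : (1 - β) * cminus * μ < r * (1 - β * γ) := by
      have h1 := lt_of_lt_of_le hB hA
      nlinarith
    nlinarith [mul_pos h1β hμpos]
  have hξ0neg : ξ 0 < 0 := by
    have h1 : (1 - β) * ξ 0 < 0 := by rw [hξ0']; linarith
    nlinarith
  have hWneg : ∀ y : ℝ, y ≤ μ → W y ≤ 0 := by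
    intro y hy
    have h1 : W y ≤ W μ := hWmono y μ hy
    have h2 : W μ = ξ 0 := by
      rw [hW1 μ (le_of_eq hs0), hs0]
      ring
    linarith
  -- no-reach branch dominates W x
  have hnoreach : ∀ x t : ℝ, 0 ≤ x → x ≤ t → t < μ →
      W x ≤ (1 - β * γ) * cplus * t + β * W (γ * t) := by
    intro x t hx hxt htμ
    have ht0 : 0 ≤ t := le_trans hx hxt
    have hγt : γ * t ≤ t := by nlinarith
    have l1 : W t ≤ W (γ * t) + (cplus - cminus) * (t - γ * t) := by
      have := hWlip (γ * t) t hγt (by rw [hs0]; linarith)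
      linarith
    have l2 : W (γ * t) ≤ 0 := hWneg (γ * t) (by nlinarith)
    have l5 : (1 - β) * W (γ * t) ≤ 0 :=
      mul_nonpos_iff.mpr (Or.inl ⟨by linarith, l2⟩)
    have l3 : 0 ≤ t * ((γ - β * γ) * cplus + (1 - γ) * cminus) := by
      apply mul_nonneg ht0
      nlinarith
    have l4 : W x ≤ W t := hWmono x t hxt
    nlinarith [l1, l5, l3, l4]
  -- final assembly
  intro x hx
  have key : ∀ t : ℝ, s n ≤ t →
      bellObj β γ cplus cminus r δ μ W t (max (μ - t) 0) = W t := by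
    intro t ht
    have hind : μ ≤ t + max (μ - t) 0 := by
      have := le_max_left (μ - t) 0
      linarith
    rw [bellObj, if_pos hind, mul_one, mul_one]
    exact hH t ht
  have hWsn : W (s n) = ξ n := by
    obtain ⟨n', hn'⟩ : ∃ n', n = n' + 1 := ⟨n - 1, by omega⟩
    rw [hn', hW2 n' (by omega) (s (n' + 1)) le_rfl (hsdec n')]
    ring
  have hmem : W x ∈ { v : ℝ | ∃ xt u : ℝ, x ≤ xt ∧ 0 ≤ u ∧
      v = bellObj β γ cplus cminus r δ μ W xt u } := by
    rcases le_or_gt (s n) x with hc | hc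
    · exact ⟨x, max (μ - x) 0, le_rfl, le_max_right _ _, (key x hc).symm⟩
    · refine ⟨s n, max (μ - s n) 0, le_of_lt hc, le_max_right _ _, ?_⟩
      rw [key (s n) le_rfl, hWsn, hW3 x hc]
  have hlow : ∀ v ∈ { v : ℝ | ∃ xt u : ℝ, x ≤ xt ∧ 0 ≤ u ∧
      v = bellObj β γ cplus cminus r δ μ W xt u }, W x ≤ v := by
    rintro v ⟨xt, u, hxxt, hu, rfl⟩
    rw [bellObj]
    by_cases hi : μ ≤ xt + u
    · rw [if_pos hi, mul_one, mul_one]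
      have h1 : max (μ - xt) 0 ≤ u := max_le (by linarith) hu
      have h2 : cminus * max (μ - xt) 0 ≤ cminus * u :=
        mul_le_mul_of_nonneg_left h1 (le_of_lt hcm)
      have h3 := hreach x xt hxxt
      linarith
    · rw [if_neg hi, mul_zero, mul_zero, add_zero, sub_zero]
      have hxtμ : xt < μ := by
        by_contra hcon
        push_neg at hcon
        exact hi (by linarith)
      have h1 := hnoreach x xt hx hxxt hxtμ
      have h2 : 0 ≤ cminus * u := mul_nonneg (le_of_lt hcm) hu
      linarith
  rw [bellRHS]
  refine le_antisymm (le_csInf ⟨W x, hmem⟩ hlow) (csInf_le ⟨W x, hlow⟩ hmem)
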